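/- arXiv:2006.12466 — 2 statements merged into one kernel-verified Lean document; each statement's English description precedes it below -/
import Mathlib

section
/- Let N1 = N(mu1, sigma^2 I) and N2 = N(mu2, sigma^2 I) be Gaussian measures on R^d and g : R^d → R a nonnegative measurable function with finite second moment under N1. Then E_{z~N1}[g(z)] - E_{z~N2}[g(z)] ≤ min{ ||mu1 - mu2|| / sigma , 1 } · sqrt( E_{z~N1}[g(z)^2] ). -/
open MeasureTheory

/-- The density of `N(μ, σ² I)` on `ℝ^d`. -/
noncomputable def gaussPdf (d : ℕ) (μ : EuclideanSpace ℝ (Fin d)) (σ : ℝ)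
    (z : EuclideanSpace ℝ (Fin d)) : ℝ :=
  (2 * Real.pi * σ ^ 2) ^ (-(d : ℝ) / 2) * Real.exp (-‖z - μ‖ ^ 2 / (2 * σ ^ 2))

/-- The Gaussian measure `N(μ, σ² I)` on `ℝ^d`. -/
noncomputable def gaussMeasure (d : ℕ) (μ : EuclideanSpace ℝ (Fin d)) (σ : ℝ) :
    Measure (EuclideanSpace ℝ (Fin d)) :=
  volume.withDensity (fun z => ENNReal.ofReal (gaussPdf d μ σ z))

section Aux

variable {d : ℕ} {σ : ℝ}

local notation "Euc" => EuclideanSpace ℝ (Fin d)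

lemma base_pos (hσ : 0 < σ) : (0:ℝ) < 2 * Real.pi * σ ^ 2 :=
  mul_pos (mul_pos two_pos Real.pi_pos) (pow_pos hσ 2)

lemma gaussPdf_pos (hσ : 0 < σ) (μ z : Euc) : 0 < gaussPdf d μ σ z :=
  mul_pos (Real.rpow_pos_of_pos (base_pos hσ) _) (Real.exp_pos _)

lemma gaussPdf_continuous (μ : Euc) : Continuous (gaussPdf d μ σ) := by
  unfold gaussPdf
  exact continuous_const.mul (Real.continuous_exp.comp
    ((((continuous_id.sub continuous_const).norm.pow 2).neg).div_const _))

lemma integral_rexp_shift {c : ℝ} (hc : 0 < c) (μ : Euc) :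
    ∫ z : Euc, Real.exp (-c * ‖z - μ‖ ^ 2) = (Real.pi / c) ^ ((d:ℝ) / 2) := by
  rw [integral_sub_right_eq_self (fun y : Euc => Real.exp (-c * ‖y‖ ^ 2)) μ]
  have h := GaussianFourier.integral_rexp_neg_mul_sq_norm (V := Euc) hc
  rwa [finrank_euclideanSpace_fin] at h

lemma integrable_rexp_shift {c : ℝ} (hc : 0 < c) (μ : Euc) :
    Integrable (fun z : Euc => Real.exp (-c * ‖z - μ‖ ^ 2)) := by
  have h := (GaussianFourier.integrable_cexp_neg_mul_sq_norm_add (V := Euc)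
    (b := (c:ℂ)) (by simpa using hc) 0 0).norm
  have he : (fun v : Euc => ‖Complex.exp (-(c:ℂ) * (‖v‖:ℂ) ^ 2 + 0 * ((inner ℝ (0:Euc) v : ℝ):ℂ))‖)
      = fun v : Euc => Real.exp (-c * ‖v‖ ^ 2) := by
    funext v
    rw [Complex.norm_exp]
    congr 1
    simp [← Complex.ofReal_pow, ← Complex.ofReal_mul, ← Complex.ofReal_neg]
  rw [he] at h
  exact h.comp_sub_right μ

lemma gaussPdf_eq (μ z : Euc) :
    gaussPdf d μ σ z
      = (2 * Real.pi * σ ^ 2) ^ (-(d : ℝ) / 2)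
        * Real.exp (-(2 * σ ^ 2)⁻¹ * ‖z - μ‖ ^ 2) := by
  unfold gaussPdf
  congr 2
  ring

lemma integrable_gaussPdf (hσ : 0 < σ) (μ : Euc) : Integrable (gaussPdf d μ σ) := by
  have : (0:ℝ) < (2 * σ ^ 2)⁻¹ := by positivity
  refine ((integrable_rexp_shift this μ).const_mul
    ((2 * Real.pi * σ ^ 2) ^ (-(d : ℝ) / 2))).congr ?_
  filter_upwards with z
  rw [gaussPdf_eq]

lemma integral_gaussPdf (hσ : 0 < σ) (μ : Euc) : ∫ z : Euc, gaussPdf d μ σ z = 1 := by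
  have hc : (0:ℝ) < (2 * σ ^ 2)⁻¹ := by positivity
  have hσ' : σ ≠ 0 := hσ.ne'
  simp_rw [gaussPdf_eq (σ := σ) μ]
  rw [integral_const_mul, integral_rexp_shift hc μ]
  have h2 : Real.pi / (2 * σ ^ 2)⁻¹ = 2 * Real.pi * σ ^ 2 := by
    field_simp
  rw [h2, ← Real.rpow_add (base_pos hσ), show -(d:ℝ)/2 + (d:ℝ)/2 = 0 by ring, Real.rpow_zero]

lemma sqrt_gaussPdf (hσ : 0 < σ) (μ z : Euc) :
    Real.sqrt (gaussPdf d μ σ z)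
      = (2 * Real.pi * σ ^ 2) ^ (-(d : ℝ) / 4) * Real.exp (-‖z - μ‖ ^ 2 / (4 * σ ^ 2)) := by
  have hb := base_pos (σ := σ) hσ
  have hσ' : σ ≠ 0 := hσ.ne'
  have key : gaussPdf d μ σ z
      = ((2 * Real.pi * σ ^ 2) ^ (-(d : ℝ) / 4) * Real.exp (-‖z - μ‖ ^ 2 / (4 * σ ^ 2))) ^ 2 := by
    rw [mul_pow, ← Real.rpow_natCast ((2 * Real.pi * σ ^ 2) ^ (-(d : ℝ) / 4)) 2,
      ← Real.rpow_mul hb.le, ← Real.exp_nat_mul]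
    unfold gaussPdf
    congr 1
    · congr 1
      ring
    · push_cast
      field_simp
      ring
  rw [key, Real.sqrt_sq (by positivity)]

lemma norm_identity1 (μ1 μ2 z : Euc) :
    ‖z - μ1‖ ^ 2 + ‖z - μ2‖ ^ 2
      = 2 * ‖z - (2:ℝ)⁻¹ • (μ1 + μ2)‖ ^ 2 + ‖μ1 - μ2‖ ^ 2 / 2 := by
  have h := parallelogram_law_with_norm ℝ (z - μ1) (z - μ2)
  have e1 : z - μ1 + (z - μ2) = (2:ℝ) • (z - (2:ℝ)⁻¹ • (μ1 + μ2)) := by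
    rw [smul_sub, smul_smul, two_smul]
    norm_num
    abel
  have e2 : z - μ1 - (z - μ2) = μ2 - μ1 := by abel
  rw [e1, e2, norm_smul] at h
  simp only [Real.norm_ofNat] at h
  rw [norm_sub_rev μ2 μ1] at h
  nlinarith [h]

lemma norm_identity2 (μ1 μ2 z : Euc) :
    2 * ‖z - μ2‖ ^ 2 - ‖z - μ1‖ ^ 2
      = ‖z - ((2:ℝ) • μ2 - μ1)‖ ^ 2 - 2 * ‖μ1 - μ2‖ ^ 2 := by
  have h := parallelogram_law_with_norm ℝ (z - μ2) (μ2 - μ1)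
  have e1 : z - μ2 + (μ2 - μ1) = z - μ1 := by abel
  have e2 : z - μ2 - (μ2 - μ1) = z - ((2:ℝ) • μ2 - μ1) := by
    rw [two_smul]; abel
  rw [e1, e2, norm_sub_rev μ2 μ1] at h
  nlinarith [h]

lemma sqrtPdf_mul (hσ : 0 < σ) (μ1 μ2 z : Euc) :
    Real.sqrt (gaussPdf d μ1 σ z) * Real.sqrt (gaussPdf d μ2 σ z)
      = Real.exp (-‖μ1 - μ2‖ ^ 2 / (8 * σ ^ 2))
        * gaussPdf d ((2:ℝ)⁻¹ • (μ1 + μ2)) σ z := by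
  have hb := base_pos (σ := σ) hσ
  have hσ' : σ ≠ 0 := hσ.ne'
  rw [sqrt_gaussPdf hσ, sqrt_gaussPdf hσ]
  unfold gaussPdf
  rw [mul_mul_mul_comm, ← Real.rpow_add hb, show -(d:ℝ)/4 + -(d:ℝ)/4 = -(d:ℝ)/2 by ring,
    ← Real.exp_add, mul_left_comm, ← Real.exp_add]
  congr 1
  have h := norm_identity1 μ1 μ2 z
  rw [show -‖z - μ1‖ ^ 2 / (4 * σ ^ 2) + -‖z - μ2‖ ^ 2 / (4 * σ ^ 2)
      = -(‖z - μ1‖ ^ 2 + ‖z - μ2‖ ^ 2) / (4 * σ ^ 2) by ring, h]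
  field_simp
  ring

lemma pdf_div_sqrt_sq (hσ : 0 < σ) (μ1 μ2 z : Euc) :
    (gaussPdf d μ2 σ z / Real.sqrt (gaussPdf d μ1 σ z)) ^ 2
      = Real.exp (‖μ1 - μ2‖ ^ 2 / σ ^ 2) * gaussPdf d ((2:ℝ) • μ2 - μ1) σ z := by
  have hb := base_pos (σ := σ) hσ
  have hσ' : σ ≠ 0 := hσ.ne'
  have h1 : (0:ℝ) < gaussPdf d μ1 σ z := gaussPdf_pos hσ μ1 z
  rw [div_pow, Real.sq_sqrt h1.le, div_eq_iff h1.ne']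
  unfold gaussPdf
  rw [mul_pow, ← Real.rpow_natCast ((2 * Real.pi * σ ^ 2) ^ (-(d : ℝ) / 2)) 2,
    ← Real.rpow_mul hb.le, ← Real.exp_nat_mul]
  have hrhs : Real.exp (‖μ1 - μ2‖ ^ 2 / σ ^ 2)
        * ((2 * Real.pi * σ ^ 2) ^ (-(d:ℝ) / 2)
          * Real.exp (-‖z - ((2:ℝ) • μ2 - μ1)‖ ^ 2 / (2 * σ ^ 2)))
        * ((2 * Real.pi * σ ^ 2) ^ (-(d:ℝ) / 2)
          * Real.exp (-‖z - μ1‖ ^ 2 / (2 * σ ^ 2)))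
      = (2 * Real.pi * σ ^ 2) ^ (-(d:ℝ) / 2 * 2)
        * Real.exp (‖μ1 - μ2‖ ^ 2 / σ ^ 2 + -‖z - ((2:ℝ) • μ2 - μ1)‖ ^ 2 / (2 * σ ^ 2)
            + -‖z - μ1‖ ^ 2 / (2 * σ ^ 2)) := by
    rw [show -(d:ℝ)/2 * 2 = -(d:ℝ)/2 + -(d:ℝ)/2 by ring, Real.rpow_add hb,
      Real.exp_add, Real.exp_add]
    ring
  rw [hrhs]
  congr 1
  have h := norm_identity2 μ1 μ2 z
  have hnu : ‖z - ((2:ℝ) • μ2 - μ1)‖ ^ 2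
      = 2 * ‖z - μ2‖ ^ 2 - ‖z - μ1‖ ^ 2 + 2 * ‖μ1 - μ2‖ ^ 2 := by linarith
  rw [hnu]
  push_cast
  field_simp
  ring

lemma gaussMeasure_integral (hσ : 0 < σ) (μ : Euc) (f : Euc → ℝ) :
    ∫ z, f z ∂(gaussMeasure d μ σ) = ∫ z, f z * gaussPdf d μ σ z := by
  unfold gaussMeasure
  have hm : Measurable fun z : Euc => (gaussPdf d μ σ z).toNNReal :=
    ((gaussPdf_continuous μ).measurable).real_toNNReal
  have hcast : (fun z : Euc => ENNReal.ofReal (gaussPdf d μ σ z))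
      = fun z => ((gaussPdf d μ σ z).toNNReal : ENNReal) := rfl
  rw [hcast, integral_withDensity_eq_integral_smul hm]
  congr 1
  funext z
  simp only [NNReal.smul_def, smul_eq_mul, Real.coe_toNNReal _ (gaussPdf_pos hσ μ z).le]
  ring

lemma gaussMeasure_integrable_iff (hσ : 0 < σ) (μ : Euc) (f : Euc → ℝ) :
    Integrable f (gaussMeasure d μ σ) ↔ Integrable (fun z => f z * gaussPdf d μ σ z) volume := by
  unfold gaussMeasure
  rw [integrable_withDensity_iff ((gaussPdf_continuous μ).measurable.ennreal_ofReal)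
    (Filter.Eventually.of_forall fun z => ENNReal.ofReal_lt_top)]
  have : (fun z : Euc => f z * (ENNReal.ofReal (gaussPdf d μ σ z)).toReal)
      = fun z => f z * gaussPdf d μ σ z := by
    funext z
    rw [ENNReal.toReal_ofReal (gaussPdf_pos hσ μ z).le]
  rw [this]

lemma cs_integral {α : Type*} [MeasurableSpace α] {μ : Measure α} {f h : α → ℝ}
    (hf0 : ∀ x, 0 ≤ f x) (hh0 : ∀ x, 0 ≤ h x)
    (hfm : AEStronglyMeasurable f μ) (hhm : AEStronglyMeasurable h μ)
    (hf2 : Integrable (fun x => f x ^ 2) μ) (hh2 : Integrable (fun x => h x ^ 2) μ) :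
    ∫ x, f x * h x ∂μ ≤ Real.sqrt (∫ x, f x ^ 2 ∂μ) * Real.sqrt (∫ x, h x ^ 2 ∂μ) := by
  have hpq : Real.HolderConjugate 2 2 := ⟨by norm_num, by norm_num, by norm_num⟩
  have h2 : ENNReal.ofReal (2:ℝ) = 2 := by
    rw [show (2:ℝ) = ((2:ℕ):ℝ) by norm_num, ENNReal.ofReal_natCast]
    norm_num
  have hf : MemLp f (ENNReal.ofReal (2:ℝ)) μ := by
    rw [h2]; exact (memLp_two_iff_integrable_sq hfm).2 hf2
  have hh : MemLp h (ENNReal.ofReal (2:ℝ)) μ := by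
    rw [h2]; exact (memLp_two_iff_integrable_sq hhm).2 hh2
  have key := integral_mul_le_Lp_mul_Lq_of_nonneg hpq
    (Filter.Eventually.of_forall hf0) (Filter.Eventually.of_forall hh0) hf hh
  have conv : ∀ u : α → ℝ, (∫ x, u x ^ (2:ℝ) ∂μ) ^ ((1:ℝ)/2) = Real.sqrt (∫ x, u x ^ 2 ∂μ) := by
    intro u
    rw [Real.sqrt_eq_rpow]
    congr 1
    apply integral_congr_ae
    filter_upwards with x
    rw [show (2:ℝ) = ((2:ℕ):ℝ) by norm_num, Real.rpow_natCast]
  rw [conv, conv] at key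
  exact key

lemma integrable_mul_of_sq {α : Type*} [MeasurableSpace α] {μ : Measure α} {f h : α → ℝ}
    (hfm : AEStronglyMeasurable f μ) (hhm : AEStronglyMeasurable h μ)
    (hf2 : Integrable (fun x => f x ^ 2) μ) (hh2 : Integrable (fun x => h x ^ 2) μ) :
    Integrable (fun x => f x * h x) μ := by
  refine ((hf2.add hh2).div_const 2).mono' (hfm.mul hhm)
    (Filter.Eventually.of_forall fun x => ?_)
  simp only [Pi.add_apply, Real.norm_eq_abs, abs_mul]
  nlinarith [sq_nonneg (|f x| - |h x|), sq_abs (f x), sq_abs (h x)]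

end Aux

theorem stmt_1 (d : ℕ) (mu1 mu2 : EuclideanSpace ℝ (Fin d)) (σ : ℝ) (hσ : 0 < σ)
    (g : EuclideanSpace ℝ (Fin d) → ℝ) (hg : Measurable g) (hg0 : ∀ z, 0 ≤ g z)
    (hg2 : Integrable (fun z => g z ^ 2) (gaussMeasure d mu1 σ)) :
    (∫ z, g z ∂(gaussMeasure d mu1 σ)) - ∫ z, g z ∂(gaussMeasure d mu2 σ) ≤
      min (‖mu1 - mu2‖ / σ) 1 * Real.sqrt (∫ z, g z ^ 2 ∂(gaussMeasure d mu1 σ)) := by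
  have hσ' : σ ≠ 0 := hσ.ne'
  set p1 : EuclideanSpace ℝ (Fin d) → ℝ := gaussPdf d mu1 σ with hp1def
  set p2 : EuclideanSpace ℝ (Fin d) → ℝ := gaussPdf d mu2 σ with hp2def
  set q1 : EuclideanSpace ℝ (Fin d) → ℝ := fun z => Real.sqrt (p1 z) with hq1def
  set q2 : EuclideanSpace ℝ (Fin d) → ℝ := fun z => Real.sqrt (p2 z) with hq2def
  have hp1pos : ∀ z, 0 < p1 z := gaussPdf_pos hσ mu1
  have hp2pos : ∀ z, 0 < p2 z := gaussPdf_pos hσ mu2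
  have hq1pos : ∀ z, 0 < q1 z := fun z => Real.sqrt_pos.2 (hp1pos z)
  have hp1c : Continuous p1 := gaussPdf_continuous mu1
  have hp2c : Continuous p2 := gaussPdf_continuous mu2
  have hq1c : Continuous q1 := Real.continuous_sqrt.comp hp1c
  have hq2c : Continuous q2 := Real.continuous_sqrt.comp hp2c
  have hq1sq : ∀ z, q1 z ^ 2 = p1 z := fun z => Real.sq_sqrt (hp1pos z).le
  have hq2sq : ∀ z, q2 z ^ 2 = p2 z := fun z => Real.sq_sqrt (hp2pos z).le
  -- convert all integrals to volume integrals
  rw [gaussMeasure_integral hσ mu1, gaussMeasure_integral hσ mu2, gaussMeasure_integral hσ mu1]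
  have hI : Integrable (fun z => g z ^ 2 * p1 z) volume :=
    (gaussMeasure_integrable_iff hσ mu1 _).1 hg2
  set I : ℝ := ∫ z, g z ^ 2 * p1 z with hIdef
  have hI0 : 0 ≤ I :=
    integral_nonneg fun z => mul_nonneg (sq_nonneg _) (hp1pos z).le
  -- f := g * q1
  set f : EuclideanSpace ℝ (Fin d) → ℝ := fun z => g z * q1 z with hfdef
  have hfm : AEStronglyMeasurable f volume :=
    (hg.aestronglyMeasurable.mul hq1c.aestronglyMeasurable)
  have hf0 : ∀ z, 0 ≤ f z := fun z => mul_nonneg (hg0 z) (hq1pos z).le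
  have hfsq : (fun z => f z ^ 2) = fun z => g z ^ 2 * p1 z := by
    funext z
    rw [hfdef]
    simp only
    rw [mul_pow, hq1sq]
  have hf2 : Integrable (fun z => f z ^ 2) volume := by rw [hfsq]; exact hI
  have hfI : ∫ z, f z ^ 2 = I := by rw [hfsq]
  -- integrability of q1², q2²
  have hq1sq_int : Integrable (fun z => q1 z ^ 2) volume := by
    have := integrable_gaussPdf hσ mu1
    refine this.congr ?_
    filter_upwards with z
    rw [hq1sq]
  have hq2sq_int : Integrable (fun z => q2 z ^ 2) volume := by
    have := integrable_gaussPdf hσ mu2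
    refine this.congr ?_
    filter_upwards with z
    rw [hq2sq]
  -- Bound A : ∫ g p1 ≤ √I
  have hgp1_eq : (fun z => g z * p1 z) = fun z => f z * q1 z := by
    funext z
    simp only [hfdef, hq1def]
    rw [mul_assoc, Real.mul_self_sqrt (hp1pos z).le]
  have hq1I : ∫ z, q1 z ^ 2 = 1 := by
    rw [show (fun z => q1 z ^ 2) = p1 from funext hq1sq]
    exact integral_gaussPdf hσ mu1
  have boundA : ∫ z, g z * p1 z ≤ Real.sqrt I := by
    rw [hgp1_eq]
    calc ∫ z, f z * q1 z
        ≤ Real.sqrt (∫ z, f z ^ 2) * Real.sqrt (∫ z, q1 z ^ 2) :=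
          cs_integral hf0 (fun z => (hq1pos z).le) hfm hq1c.aestronglyMeasurable hf2 hq1sq_int
      _ = Real.sqrt I := by rw [hfI, hq1I, Real.sqrt_one, mul_one]
  -- integrability of g*p1
  have hgp1_int : Integrable (fun z => g z * p1 z) volume := by
    rw [hgp1_eq]
    exact integrable_mul_of_sq hfm hq1c.aestronglyMeasurable hf2 hq1sq_int
  -- integrability of g*p2 via chi-square trick
  set r : EuclideanSpace ℝ (Fin d) → ℝ := fun z => p2 z / q1 z with hrdef
  have hrc : Continuous r := hp2c.div hq1c fun z => (hq1pos z).ne'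
  have hr0 : ∀ z, 0 ≤ r z := fun z => div_nonneg (hp2pos z).le (hq1pos z).le
  have hrsq : (fun z => r z ^ 2)
      = fun z => Real.exp (‖mu1 - mu2‖ ^ 2 / σ ^ 2) * gaussPdf d ((2:ℝ) • mu2 - mu1) σ z := by
    funext z
    exact pdf_div_sqrt_sq hσ mu1 mu2 z
  have hrsq_int : Integrable (fun z => r z ^ 2) volume := by
    rw [hrsq]
    exact (integrable_gaussPdf hσ _).const_mul _
  have hgp2_eq : (fun z => g z * p2 z) = fun z => f z * r z := by
    funext z
    simp only [hfdef, hrdef, hq1def]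
    have hne : Real.sqrt (p1 z) ≠ 0 := (Real.sqrt_pos.2 (hp1pos z)).ne'
    field_simp
  have hgp2_int : Integrable (fun z => g z * p2 z) volume := by
    rw [hgp2_eq]
    exact integrable_mul_of_sq hfm hrc.aestronglyMeasurable hf2 hrsq_int
  -- the Hellinger-type function h := 2 |q1 - q2|
  set h : EuclideanSpace ℝ (Fin d) → ℝ := fun z => 2 * |q1 z - q2 z| with hhdef
  have hhc : Continuous h := (continuous_const.mul (hq1c.sub hq2c).abs)
  have hh0 : ∀ z, 0 ≤ h z := fun z => by positivity
  set Em : ℝ := Real.exp (-‖mu1 - mu2‖ ^ 2 / (8 * σ ^ 2)) with hEmdef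
  set pm : EuclideanSpace ℝ (Fin d) → ℝ := gaussPdf d ((2:ℝ)⁻¹ • (mu1 + mu2)) σ with hpmdef
  have hq1q2 : ∀ z, q1 z * q2 z = Em * pm z := fun z => sqrtPdf_mul hσ mu1 mu2 z
  have hh2eq : (fun z => h z ^ 2) = fun z => 4 * (p1 z + p2 z) - 8 * Em * pm z := by
    funext z
    rw [hhdef]
    simp only
    rw [mul_pow, sq_abs, sub_sq, hq1sq, hq2sq]
    have := hq1q2 z
    nlinarith [this]
  have i1 : Integrable (fun z => p1 z) volume := integrable_gaussPdf hσ mu1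
  have i2 : Integrable (fun z => p2 z) volume := integrable_gaussPdf hσ mu2
  have im : Integrable (fun z => pm z) volume := integrable_gaussPdf hσ _
  have ip1 : ∫ z, p1 z = 1 := integral_gaussPdf hσ mu1
  have ip2 : ∫ z, p2 z = 1 := integral_gaussPdf hσ mu2
  have ipm : ∫ z, pm z = 1 := integral_gaussPdf hσ _
  have i12 : Integrable (fun z => 4 * (p1 z + p2 z)) volume := (i1.add i2).const_mul 4
  have i8 : Integrable (fun z => 8 * Em * pm z) volume := im.const_mul (8 * Em)
  have hh2_int : Integrable (fun z => h z ^ 2) volume := by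
    rw [hh2eq]
    exact i12.sub i8
  have hh2_val : ∫ z, h z ^ 2 = 8 - 8 * Em := by
    rw [hh2eq, integral_sub i12 i8,
      integral_const_mul, integral_const_mul, integral_add i1 i2, ip1, ip2, ipm]
    ring
  have hh2_bound : ∫ z, h z ^ 2 ≤ ‖mu1 - mu2‖ ^ 2 / σ ^ 2 := by
    rw [hh2_val]
    have hx : (0:ℝ) ≤ ‖mu1 - mu2‖ ^ 2 / (8 * σ ^ 2) := by positivity
    have he : 1 - ‖mu1 - mu2‖ ^ 2 / (8 * σ ^ 2) ≤ Em := by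
      rw [hEmdef]
      have := Real.add_one_le_exp (-(‖mu1 - mu2‖ ^ 2 / (8 * σ ^ 2)))
      rw [show -‖mu1 - mu2‖ ^ 2 / (8 * σ ^ 2) = -(‖mu1 - mu2‖ ^ 2 / (8 * σ ^ 2)) by ring]
      linarith
    have h8 : 8 * (‖mu1 - mu2‖ ^ 2 / (8 * σ ^ 2)) = ‖mu1 - mu2‖ ^ 2 / σ ^ 2 := by
      field_simp
    linarith
  -- pointwise bound for Bound B
  have hpoint : ∀ z, g z * p1 z - g z * p2 z ≤ f z * h z := by
    intro z
    rw [hfdef, hhdef]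
    simp only
    rw [← hq1sq z, ← hq2sq z]
    rcases le_total (q2 z) (q1 z) with hba | hab
    · rw [abs_of_nonneg (by linarith)]
      nlinarith [hg0 z, (hq1pos z).le, Real.sqrt_nonneg (p2 z), mul_nonneg (hg0 z) (sub_nonneg.2 hba)]
    · rw [abs_of_nonpos (by linarith)]
      nlinarith [hg0 z, (hq1pos z).le, Real.sqrt_nonneg (p2 z), mul_nonneg (hg0 z) (sub_nonneg.2 hab)]
  have hfh_int : Integrable (fun z => f z * h z) volume :=
    integrable_mul_of_sq hfm hhc.aestronglyMeasurable hf2 hh2_int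
  have boundB : (∫ z, g z * p1 z) - ∫ z, g z * p2 z ≤ Real.sqrt I * (‖mu1 - mu2‖ / σ) := by
    rw [← integral_sub hgp1_int hgp2_int]
    calc ∫ z, (g z * p1 z - g z * p2 z)
        ≤ ∫ z, f z * h z :=
          integral_mono (hgp1_int.sub hgp2_int) hfh_int hpoint
      _ ≤ Real.sqrt (∫ z, f z ^ 2) * Real.sqrt (∫ z, h z ^ 2) :=
          cs_integral hf0 hh0 hfm hhc.aestronglyMeasurable hf2 hh2_int
      _ ≤ Real.sqrt I * (‖mu1 - mu2‖ / σ) := by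
          rw [hfI]
          refine mul_le_mul_of_nonneg_left ?_ (Real.sqrt_nonneg _)
          calc Real.sqrt (∫ z, h z ^ 2)
              ≤ Real.sqrt (‖mu1 - mu2‖ ^ 2 / σ ^ 2) := Real.sqrt_le_sqrt hh2_bound
            _ = ‖mu1 - mu2‖ / σ := by
                rw [show ‖mu1 - mu2‖ ^ 2 / σ ^ 2 = (‖mu1 - mu2‖ / σ) ^ 2 by ring,
                  Real.sqrt_sq (by positivity)]
  -- combine
  have hgp2_nonneg : 0 ≤ ∫ z, g z * p2 z :=
    integral_nonneg fun z => mul_nonneg (hg0 z) (hp2pos z).le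
  rcases le_total (‖mu1 - mu2‖ / σ) 1 with hc | hc
  · rw [min_eq_left hc]
    calc (∫ z, g z * p1 z) - ∫ z, g z * p2 z
        ≤ Real.sqrt I * (‖mu1 - mu2‖ / σ) := boundB
      _ = ‖mu1 - mu2‖ / σ * Real.sqrt I := mul_comm _ _
  · rw [min_eq_right hc, one_mul]
    calc (∫ z, g z * p1 z) - ∫ z, g z * p2 z
        ≤ ∫ z, g z * p1 z := by linarith
      _ ≤ Real.sqrt I := boundA
end

section
/- Fix λ > 0, a positive integer H, and for t = 0, ..., T-1 and h = 0, ..., H-1 vectors φ_h^t in R^d. Define Σ^0 = λ I and Σ^{t+1} = Σ^t + Σ_{h=0}^{H-1} φ_h^t (φ_h^t)^T. Then Σ_{t=0}^{T-1} min{ Σ_{h=0}^{H-1} (φ_h^t)^T (Σ^t)^{-1} φ_h^t , 1 } ≤ 2 log( det(Σ^T) / det(Σ^0) ). -/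
open Matrix

private lemma aux_prod_one_add {ι : Type*} (s : Finset ι) (f : ι → ℝ)
    (hf : ∀ i ∈ s, 0 ≤ f i) : 1 + ∑ i ∈ s, f i ≤ ∏ i ∈ s, (1 + f i) := by
  induction s using Finset.cons_induction with
  | empty => simp
  | cons a s ha ih =>
    rw [Finset.sum_cons, Finset.prod_cons]
    have h1 : 0 ≤ f a := hf a (Finset.mem_cons_self a s)
    have h2 : ∀ i ∈ s, 0 ≤ f i := fun i hi => hf i (Finset.mem_cons_of_mem hi)
    have hsum : 0 ≤ ∑ i ∈ s, f i := Finset.sum_nonneg h2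
    calc 1 + (f a + ∑ i ∈ s, f i) ≤ (1 + f a) * (1 + ∑ i ∈ s, f i) := by nlinarith
    _ ≤ (1 + f a) * ∏ i ∈ s, (1 + f i) :=
        mul_le_mul_of_nonneg_left (ih h2) (by linarith)

private lemma aux_det_one_add {d : ℕ} (N : Matrix (Fin d) (Fin d) ℝ)
    (hN : N.PosSemidef) : 1 + N.trace ≤ (1 + N).det := by
  have hH := hN.1
  set U : Matrix (Fin d) (Fin d) ℝ := (hH.eigenvectorUnitary : Matrix (Fin d) (Fin d) ℝ)
    with hU
  have hUU : U * star U = 1 := Matrix.mem_unitaryGroup_iff.mp hH.eigenvectorUnitary.2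
  have hUU' : star U * U = 1 := Matrix.mem_unitaryGroup_iff'.mp hH.eigenvectorUnitary.2
  set D : Matrix (Fin d) (Fin d) ℝ := diagonal (RCLike.ofReal ∘ hH.eigenvalues) with hD
  have hspec : N = U * D * star U := hH.spectral_theorem
  have key : U * (1 + D) * star U = 1 + N := by
    rw [mul_add, mul_one, add_mul, hUU, ← hspec]
  have hdet : (1 + N).det = ∏ i, (1 + hH.eigenvalues i) := by
    rw [← key, det_mul_right_comm, hUU, one_mul, hD, ← diagonal_one, diagonal_add,
      det_diagonal]
    simp [Function.comp]
  have htr : N.trace = ∑ i, hH.eigenvalues i := by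
    have h1 : N.trace = (U * D * star U).trace := congrArg Matrix.trace hspec
    rw [trace_mul_comm, ← mul_assoc, hUU', one_mul, hD, trace_diagonal] at h1
    simpa [Function.comp] using h1
  rw [hdet, htr]
  exact aux_prod_one_add Finset.univ _ (fun i _ => hN.eigenvalues_nonneg i)

open scoped MatrixOrder in
private lemma aux_step {d : ℕ} (S M : Matrix (Fin d) (Fin d) ℝ)
    (hS : S.PosDef) (hM : M.PosSemidef) :
    S.det * (1 + (S⁻¹ * M).trace) ≤ (S + M).det := by
  set R := CFC.sqrt S with hRdef
  have hR : R.PosSemidef := (CFC.sqrt_nonneg S).posSemidef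
  have hRR : R * R = S := CFC.sqrt_mul_sqrt_self S hS.posSemidef.nonneg
  have hdetR : R.det * R.det = S.det := by rw [← det_mul, hRR]
  have hdetRne : R.det ≠ 0 := by
    intro h
    have := hS.det_pos
    rw [← hdetR, h, mul_zero] at this
    exact lt_irrefl _ this
  have hRunit : IsUnit R.det := hdetRne.isUnit
  have hRinv : R * R⁻¹ = 1 := mul_nonsing_inv R hRunit
  have hRinv' : R⁻¹ * R = 1 := nonsing_inv_mul R hRunit
  have hRH : R⁻¹ᴴ = R⁻¹ := by rw [conjTranspose_nonsing_inv, hR.1]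
  set N := R⁻¹ * M * R⁻¹ with hNdef
  have hN : N.PosSemidef := by
    have := hM.mul_mul_conjTranspose_same R⁻¹
    rwa [hRH] at this
  have hSM : S + M = R * (1 + N) * R := by
    have hM' : R * N * R = M := by
      calc R * (R⁻¹ * M * R⁻¹) * R = (R * R⁻¹) * M * (R⁻¹ * R) := by
            simp only [Matrix.mul_assoc]
      _ = M := by rw [hRinv, hRinv', one_mul, mul_one]
    rw [mul_add, mul_one, add_mul, hRR, hM']
  have htr : N.trace = (S⁻¹ * M).trace := by
    have hSinv : S⁻¹ = R⁻¹ * R⁻¹ := by rw [← hRR, Matrix.mul_inv_rev]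
    rw [hNdef, trace_mul_comm, ← mul_assoc, hSinv]
  have hdet1 : (S + M).det = S.det * (1 + N).det := by
    rw [hSM, det_mul, det_mul, ← hdetR]; ring
  rw [hdet1, ← htr]
  exact mul_le_mul_of_nonneg_left (aux_det_one_add N hN) hS.det_pos.le

private lemma aux_trace_vmv {d : ℕ} (A : Matrix (Fin d) (Fin d) ℝ) (u : Fin d → ℝ) :
    (A * vecMulVec u u).trace = u ⬝ᵥ (A *ᵥ u) := by
  simp only [trace, diag_apply, mul_apply, vecMulVec_apply, dotProduct, mulVec,
    Finset.mul_sum]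
  exact Finset.sum_congr rfl fun i _ => Finset.sum_congr rfl fun j _ => by ring

private lemma aux_sum_psd {d : ℕ} {ι : Type*} (s : Finset ι) (f : ι → Fin d → ℝ)
    (h : ∀ i ∈ s, (Matrix.vecMulVec (f i) (f i)).PosSemidef) :
    (∑ i ∈ s, Matrix.vecMulVec (f i) (f i)).PosSemidef := by
  induction s using Finset.cons_induction with
  | empty => simpa using (Matrix.PosSemidef.zero : (0 : Matrix (Fin d) (Fin d) ℝ).PosSemidef)
  | cons a s ha ih =>
    rw [Finset.sum_cons]
    exact (h a (Finset.mem_cons_self a s)).add (ih fun i hi => h i (Finset.mem_cons_of_mem hi))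

private lemma aux_vmv_psd {d : ℕ} (u : Fin d → ℝ) : (vecMulVec u u).PosSemidef := by
  refine Matrix.PosSemidef.of_dotProduct_mulVec_nonneg ?_ ?_
  · ext i j
    simp [vecMulVec_apply, conjTranspose_apply, mul_comm]
  · intro x
    have h : star x ⬝ᵥ (vecMulVec u u *ᵥ x) = (∑ i, x i * u i) * (∑ j, u j * x j) := by
      rw [Finset.sum_mul_sum]
      simp only [dotProduct, mulVec, vecMulVec_apply, star_trivial, Finset.mul_sum]
      exact Finset.sum_congr rfl fun i _ => Finset.sum_congr rfl fun j _ => by ring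
    rw [h]
    have : (∑ j, u j * x j) = (∑ i, x i * u i) := Finset.sum_congr rfl fun i _ => by ring
    rw [this]
    exact mul_self_nonneg _

private lemma aux_min_log (x : ℝ) (hx : 0 ≤ x) : min x 1 ≤ 2 * Real.log (1 + x) := by
  rcases le_total x 1 with h | h
  · rw [min_eq_left h]
    have h2 : (2 : ℝ) / (2 - x) ≤ 1 + x := by
      rw [div_le_iff₀ (by linarith)]; nlinarith
    have hexp : Real.exp (x / 2) * (1 - x / 2) ≤ 1 := by
      calc Real.exp (x / 2) * (1 - x / 2) ≤ Real.exp (x / 2) * Real.exp (-(x / 2)) :=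
            mul_le_mul_of_nonneg_left
              (by linarith [Real.add_one_le_exp (-(x / 2))]) (Real.exp_nonneg _)
      _ = 1 := by rw [← Real.exp_add]; simp
    have h3 : Real.exp (x / 2) ≤ 2 / (2 - x) := by
      rw [le_div_iff₀ (by linarith)]
      nlinarith [Real.exp_pos (x / 2)]
    have h4 : Real.exp (x / 2) ≤ 1 + x := h3.trans h2
    have h5 := (Real.le_log_iff_exp_le (by linarith : (0:ℝ) < 1 + x)).mpr h4
    linarith
  · rw [min_eq_right h]
    have hsq : Real.exp (1 / 2) * Real.exp (1 / 2) = Real.exp 1 := by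
      rw [← Real.exp_add]; norm_num
    have hlt : Real.exp (1 / 2) < 2 := by
      nlinarith [Real.exp_one_lt_d9, Real.exp_pos (1 / 2)]
    have h2 : Real.exp (1 / 2) ≤ 1 + x := by linarith
    have h5 := (Real.le_log_iff_exp_le (by linarith : (0:ℝ) < 1 + x)).mpr h2
    linarith

open Matrix in
theorem stmt_8 (d T H : ℕ) (hH : 0 < H) (lam : ℝ) (hlam : 0 < lam)
    (φ : ℕ → Fin H → Fin d → ℝ)
    (Sig : ℕ → Matrix (Fin d) (Fin d) ℝ)
    (hS0 : Sig 0 = lam • (1 : Matrix (Fin d) (Fin d) ℝ))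
    (hSrec : ∀ t, Sig (t + 1) = Sig t + ∑ h : Fin H, Matrix.vecMulVec (φ t h) (φ t h)) :
    ∑ t ∈ Finset.range T,
        min (∑ h : Fin H, φ t h ⬝ᵥ ((Sig t)⁻¹ *ᵥ φ t h)) 1 ≤
      2 * Real.log ((Sig T).det / (Sig 0).det) := by
  have hMpsd : ∀ t, (∑ h : Fin H, Matrix.vecMulVec (φ t h) (φ t h)).PosSemidef := by
    intro t
    exact aux_sum_psd _ _ fun h _ => aux_vmv_psd (φ t h)
  have hpos : ∀ t, (Sig t).PosDef := by
    intro t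
    induction t with
    | zero =>
      rw [hS0, smul_one_eq_diagonal]
      exact Matrix.PosDef.diagonal fun _ => hlam
    | succ t ih =>
      rw [hSrec t]
      exact ih.add_posSemidef (hMpsd t)
  have key : ∀ t, min (∑ h : Fin H, φ t h ⬝ᵥ ((Sig t)⁻¹ *ᵥ φ t h)) 1 ≤
      2 * (Real.log (Sig (t + 1)).det - Real.log (Sig t).det) := by
    intro t
    set x := ∑ h : Fin H, φ t h ⬝ᵥ ((Sig t)⁻¹ *ᵥ φ t h) with hxdef
    have hx0 : 0 ≤ x := by
      apply Finset.sum_nonneg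
      intro h _
      have := ((hpos t).inv.posSemidef).re_dotProduct_nonneg (φ t h)
      simpa using this
    have htr : ((Sig t)⁻¹ * ∑ h : Fin H, Matrix.vecMulVec (φ t h) (φ t h)).trace = x := by
      rw [Matrix.mul_sum, trace_sum]
      exact Finset.sum_congr rfl fun h _ => aux_trace_vmv _ _
    have hdet : (Sig t).det * (1 + x) ≤ (Sig (t + 1)).det := by
      rw [hSrec t, ← htr]
      exact aux_step _ _ (hpos t) (hMpsd t)
    have hlog : Real.log (Sig t).det + Real.log (1 + x) ≤ Real.log (Sig (t + 1)).det := by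
      rw [← Real.log_mul (hpos t).det_pos.ne' (by linarith : (1:ℝ) + x ≠ 0)]
      exact Real.log_le_log (mul_pos (hpos t).det_pos (by linarith)) hdet
    have hmin := aux_min_log x hx0
    linarith
  calc ∑ t ∈ Finset.range T, min (∑ h : Fin H, φ t h ⬝ᵥ ((Sig t)⁻¹ *ᵥ φ t h)) 1
      ≤ ∑ t ∈ Finset.range T, 2 * (Real.log (Sig (t + 1)).det - Real.log (Sig t).det) :=
        Finset.sum_le_sum fun t _ => key t
    _ = 2 * ∑ t ∈ Finset.range T, (Real.log (Sig (t + 1)).det - Real.log (Sig t).det) := by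
        rw [Finset.mul_sum]
    _ = 2 * (Real.log (Sig T).det - Real.log (Sig 0).det) := by
        rw [Finset.sum_range_sub (fun t => Real.log (Sig t).det)]
    _ = 2 * Real.log ((Sig T).det / (Sig 0).det) := by
        rw [Real.log_div (hpos T).det_pos.ne' (hpos 0).det_pos.ne']
end
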